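/- If Ω is a g×g symmetric matrix with positive definite imaginary part and [[A,B],[C,D]] ∈ Sp(2g,ℝ), then CΩ + D is invertible. -/

import Mathlib

open Matrix

/-- If `Ω` is a symmetric `g × g` complex matrix with positive definite imaginary part and
`[[A,B],[C,D]]` is a real symplectic matrix, then `CΩ + D` is invertible. -/
theorem stmt_19 (g : ℕ) (Ω : Matrix (Fin g) (Fin g) ℂ)
    (hsym : Ωᵀ = Ω)
    (hpos : Matrix.PosDef (fun i j => (Ω i j).im : Matrix (Fin g) (Fin g) ℝ))
    (A B C D : Matrix (Fin g) (Fin g) ℝ)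
    (h1 : Aᵀ * C = Cᵀ * A) (h2 : Bᵀ * D = Dᵀ * B) (h3 : Aᵀ * D - Cᵀ * B = 1) :
    IsUnit (C.map (fun x => (x : ℂ)) * Ω + D.map (fun x => (x : ℂ))) := by
  classical
  set f : ℝ →+* ℂ := Complex.ofRealHom with hf
  have hmapeq : ∀ M : Matrix (Fin g) (Fin g) ℝ, M.map (fun x => (x : ℂ)) = M.map f := by
    intro M; rfl
  set A' := A.map f
  set B' := B.map f
  set C' := C.map f
  set D' := D.map f
  rw [hmapeq C, hmapeq D]
  set P : Matrix (Fin g) (Fin g) ℝ := (fun i j => (Ω i j).im) with hP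
  set Ωc : Matrix (Fin g) (Fin g) ℂ := Ω.map (starRingEnd ℂ) with hΩc
  -- complexified symplectic relations
  have h1' : A'ᵀ * C' = C'ᵀ * A' := by
    simpa only [Matrix.map_mul, Matrix.transpose_map] using congrArg (Matrix.map · f) h1
  have h2' : B'ᵀ * D' = D'ᵀ * B' := by
    simpa only [Matrix.map_mul, Matrix.transpose_map] using congrArg (Matrix.map · f) h2
  have h3' : A'ᵀ * D' - C'ᵀ * B' = 1 := by
    have := congrArg (fun X => f.mapMatrix X) h3
    simpa only [_root_.map_sub, _root_.map_mul, _root_.map_one, RingHom.mapMatrix_apply,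
      Matrix.transpose_map] using this
  have h4' : D'ᵀ * A' - B'ᵀ * C' = 1 := by
    have := congrArg Matrix.transpose h3'
    simpa [Matrix.transpose_sub, Matrix.transpose_mul] using this
  have hsym' : ∀ i j, Ω j i = Ω i j := fun i j => congrFun (congrFun hsym i) j
  have hΩcT : Ωcᵀ = Ωc := by
    ext i j
    simp [hΩc, Matrix.map_apply, Matrix.transpose_apply, hsym' i j]
  have hΩH : Ωᴴ = Ωc := by
    ext i j
    rw [Matrix.conjTranspose_apply, hΩc, Matrix.map_apply, hsym' i j]
    rfl
  have hC'H : C'ᴴ = C'ᵀ := by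
    ext i j
    simp only [Matrix.conjTranspose_apply, Matrix.transpose_apply, Matrix.map_apply]
    exact Complex.conj_ofReal _
  have hD'H : D'ᴴ = D'ᵀ := by
    ext i j
    simp only [Matrix.conjTranspose_apply, Matrix.transpose_apply, Matrix.map_apply]
    exact Complex.conj_ofReal _
  set M := C' * Ω + D' with hM
  set N := A' * Ω + B' with hN
  have key : (A' * Ωc + B')ᵀ * M - Mᴴ * N = Ωc - Ω := by
    have hMH : Mᴴ = Ωc * C'ᵀ + D'ᵀ := by
      rw [hM, Matrix.conjTranspose_add, Matrix.conjTranspose_mul, hΩH, hC'H, hD'H]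
    rw [hMH, hN, Matrix.transpose_add, Matrix.transpose_mul, hΩcT]
    have expand : (Ωc * A'ᵀ + B'ᵀ) * (C' * Ω + D') - (Ωc * C'ᵀ + D'ᵀ) * (A' * Ω + B')
        = Ωc * (A'ᵀ * C' - C'ᵀ * A') * Ω + (B'ᵀ * D' - D'ᵀ * B')
          + Ωc * (A'ᵀ * D' - C'ᵀ * B') - (D'ᵀ * A' - B'ᵀ * C') * Ω := by
      noncomm_ring
    rw [expand, h1', h2', h3', h4']
    simp [sub_eq_add_neg, add_comm]
  -- suppose not invertible
  rw [Matrix.isUnit_iff_isUnit_det, isUnit_iff_ne_zero]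
  intro hdet
  obtain ⟨v, hv0, hv⟩ := (Matrix.exists_mulVec_eq_zero_iff).2 hdet
  -- the key scalar vanishes
  have hscal : star v ⬝ᵥ (Ωc - Ω) *ᵥ v = 0 := by
    rw [← key, Matrix.sub_mulVec, dotProduct_sub]
    have t1 : ((A' * Ωc + B')ᵀ * M) *ᵥ v = 0 := by
      rw [← Matrix.mulVec_mulVec, hv, Matrix.mulVec_zero]
    have t2 : star v ⬝ᵥ (Mᴴ * N) *ᵥ v = 0 := by
      rw [← Matrix.mulVec_mulVec, Matrix.dotProduct_mulVec, ← Matrix.star_mulVec, hv]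
      simp
    rw [t1, t2, dotProduct_zero, sub_zero]
  -- relate to the imaginary part
  have hΩdiff : Ωc - Ω = (-2 * Complex.I) • P.map (fun x => (x : ℂ)) := by
    ext i j
    simp only [Matrix.sub_apply, hΩc, Matrix.map_apply, Matrix.smul_apply, smul_eq_mul, hP]
    refine Complex.ext ?_ ?_ <;>
      simp [Complex.mul_re, Complex.mul_im, Complex.conj_re, Complex.conj_im] <;>
      try ring
    all_goals rfl
  have hs : star v ⬝ᵥ (P.map (fun x => (x : ℂ))) *ᵥ v = 0 := by
    have := hscal
    rw [hΩdiff, Matrix.smul_mulVec, dotProduct_smul, smul_eq_mul] at this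
    have h2I : (-2 * Complex.I) ≠ 0 := by simp [Complex.I_ne_zero]
    exact (mul_eq_zero.mp this).resolve_left h2I
  -- real and imaginary parts of v
  set x : Fin g → ℝ := fun i => (v i).re
  set y : Fin g → ℝ := fun i => (v i).im
  have hre : (star v ⬝ᵥ (P.map (fun x => (x : ℂ))) *ᵥ v).re
      = x ⬝ᵥ P *ᵥ x + y ⬝ᵥ P *ᵥ y := by
    simp only [dotProduct, Matrix.mulVec, Pi.star_apply, Finset.mul_sum, Complex.re_sum]
    rw [← Finset.sum_add_distrib]
    refine Finset.sum_congr rfl fun i _ => ?_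
    rw [← Finset.sum_add_distrib]
    refine Finset.sum_congr rfl fun j _ => ?_
    simp [Matrix.map_apply, Complex.mul_re, Complex.mul_im, x, y]
    try ring
  rw [hs] at hre
  -- positivity contradiction
  have hxy : x ≠ 0 ∨ y ≠ 0 := by
    by_contra hcon
    push_neg at hcon
    apply hv0
    funext i
    have hx := congrFun hcon.1 i
    have hy := congrFun hcon.2 i
    simp only [x, y, Pi.zero_apply] at hx hy
    exact Complex.ext hx hy
  have hsemix : 0 ≤ x ⬝ᵥ P *ᵥ x := by simpa using hpos.posSemidef.dotProduct_mulVec_nonneg x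
  have hsemiy : 0 ≤ y ⬝ᵥ P *ᵥ y := by simpa using hpos.posSemidef.dotProduct_mulVec_nonneg y
  have hpos' : 0 < x ⬝ᵥ P *ᵥ x + y ⬝ᵥ P *ᵥ y := by
    rcases hxy with hx | hy
    · have := hpos.dotProduct_mulVec_pos hx
      simp only [star_trivial] at this
      linarith
    · have := hpos.dotProduct_mulVec_pos hy
      simp only [star_trivial] at this
      linarith
  rw [← hre] at hpos'
  simp at hpos'
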